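/- arXiv:2006.03456 — 2 statements merged into one kernel-verified Lean document; each statement's English description precedes it below -/
import Mathlib

section
/- Let T be the standard C-tree T(a₁,…,a_k) determined by a weakly decreasing sequence n ≥ a₁ ≥ a₂ ≥ ⋯ ≥ a_k ≥ 0, with labeling s(ij) = a_{k-j} − a_{k-j+1} for i+j ≤ k (and a_{k+1} = 0) and s(v) = 0 elsewhere. Then T satisfies the column and admissibility conditions, and its reading is ω(T) = 𝔠(a_k)𝔠(a_{k-1})⋯𝔠(a₁), which is in normal form (a product of block columns with weakly increasing lengths). -/
namespace TypeC

/-- Letters of `C_n` are encoded as indices `0, …, 2n-1` in increasing order: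
index `x < n` is the unbarred value `x+1`, and index `x ≥ n` is the barred
letter `bar (2n - x)`.  `Nval n z w` is the number `N_z(w)` of letters `x` of
`w` with `x ≤ z` or `x ≥ z̄` (as values). -/
def Nval (n z : ℕ) (w : List ℕ) : ℕ :=
  w.countP (fun x => decide (x + 1 ≤ z ∨ 2 * n - z ≤ x))

/-- A column: a strictly increasing word over `C_n`. -/
def IsColumn (n : ℕ) (w : List ℕ) : Prop :=
  List.Pairwise (· < ·) w ∧ ∀ x ∈ w, x < 2 * n

/-- An admissible column: nonempty and `N_z(w) ≤ z` for all `z = 1,…,n`. -/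
def Admissible (n : ℕ) (w : List ℕ) : Prop :=
  IsColumn n w ∧ w ≠ [] ∧ ∀ z, 1 ≤ z → z ≤ n → Nval n z w ≤ z

/-- `v` is a (nonempty) strict factor of `w`. -/
def StrictFactor (v w : List ℕ) : Prop :=
  v ≠ [] ∧ ∃ w₀ w₁, w = w₀ ++ v ++ w₁ ∧ ¬(w₀ = [] ∧ w₁ = [])

/-- An almost admissible column: not admissible, but all strict factors are. -/
def AlmostAdmissible (n : ℕ) (w : List ℕ) : Prop :=
  IsColumn n w ∧ ¬Admissible n w ∧ ∀ v, StrictFactor v w → Admissible n v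

/-- Lecouvey's defining relations `R₁`, `R₂`, `R₃` of the type `C` plactic
monoid, on words of letter indices.  The bar involution on indices is
`x ↦ 2n - 1 - x`; the unbarred value `x` has index `x - 1` and `x̄` has index
`2n - x`. -/
inductive PlStep (n : ℕ) : List ℕ → List ℕ → Prop
  | R1a (x y z : ℕ) : x ≤ y → y < z → z < 2 * n → z ≠ 2 * n - 1 - x →
      PlStep n [y, z, x] [y, x, z]
  | R1b (x y z : ℕ) : x < y → y ≤ z → z < 2 * n → z ≠ 2 * n - 1 - x →
      PlStep n [x, z, y] [z, x, y]
  | R2a (x y : ℕ) : 1 < x → x ≤ n → x - 1 ≤ y → y ≤ 2 * n - x →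
      PlStep n [y, 2 * n - x + 1, x - 2] [y, x - 1, 2 * n - x]
  | R2b (x y : ℕ) : 1 < x → x ≤ n → x - 1 ≤ y → y ≤ 2 * n - x →
      PlStep n [x - 1, 2 * n - x, y] [2 * n - x + 1, x - 2, y]
  | R3 (w : List ℕ) (z : ℕ) : AlmostAdmissible n w → 1 ≤ z → z ≤ n →
      (z - 1) ∈ w → (2 * n - z) ∈ w → Nval n z w = z + 1 →
      (∀ z', 1 ≤ z' → z' < z →
        ¬((z' - 1) ∈ w ∧ (2 * n - z') ∈ w ∧ Nval n z' w = z' + 1)) →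
      PlStep n w ((w.erase (z - 1)).erase (2 * n - z))

/-- One plactic rewriting step in context. -/
def CtxStep (n : ℕ) (u v : List ℕ) : Prop :=
  ∃ a b x y, PlStep n x y ∧ u = a ++ x ++ b ∧ v = a ++ y ++ b

/-- The plactic congruence of type `C`. -/
def PlacticEq (n : ℕ) : List ℕ → List ℕ → Prop :=
  Relation.EqvGen (CtxStep n)

/-- An `(a,b)`-configuration (Kashiwara–Nakashima) in the pair of columns
`(c, d)`. -/
def HasConfig (n : ℕ) (c d : List ℕ) : Prop :=
  ∃ a b p q r s, 1 ≤ a ∧ a ≤ b ∧ b ≤ n ∧ p ≤ q ∧ q < r ∧ r ≤ s ∧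
    ((getElem? c p = some (a - 1) ∧ getElem? d q = some (b - 1) ∧
      getElem? d r = some (2 * n - b) ∧ getElem? d s = some (2 * n - a)) ∨
     (getElem? c p = some (a - 1) ∧ getElem? c q = some (b - 1) ∧
      getElem? c r = some (2 * n - b) ∧ getElem? d s = some (2 * n - a))) ∧
    b - a ≤ (s - r) + (q - p)

/-- `Prec n c d` means `c ⪯ d` : `c` is at least as long as `d`, entrywise
`≤`, and there is no `(a,b)`-configuration.  With the convention `ε = []`,
this gives `c ⪯ ε` for every `c`. -/
def Prec (n : ℕ) (c d : List ℕ) : Prop :=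
  d.length ≤ c.length ∧
  (∀ i xi yi, getElem? c (i : ℕ) = some xi → getElem? d (i : ℕ) = some yi → xi ≤ yi) ∧
  ¬HasConfig n c d

/-- A generator of `ACol`: the empty column `ε = []` or an admissible column. -/
def ColOrEps (n : ℕ) (c : List ℕ) : Prop := c = [] ∨ Admissible n c

/-- `(c₁ ← c₂) = d₁d₂` : the pair `(d₁, d₂)` is the `ε`-padded normal form of
the column insertion, characterised as the normal pair plactically congruent
to `c₁c₂`. -/
def InsPair (n : ℕ) (c₁ c₂ d₁ d₂ : List ℕ) : Prop :=
  ColOrEps n d₁ ∧ ColOrEps n d₂ ∧ Prec n d₂ d₁ ∧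
  PlacticEq n (c₁ ++ c₂) (d₁ ++ d₂)

/-- A rewriting step of the `2`-polygraph `ACol` at position `j`. -/
def StepAt (n : ℕ) (j : ℕ) (w w' : List (List ℕ)) : Prop :=
  ∃ (u v : List (List ℕ)) (c₁ c₂ d₁ d₂ : List ℕ),
    u.length = j ∧ w = u ++ c₁ :: c₂ :: v ∧ w' = u ++ d₁ :: d₂ :: v ∧
    ¬Prec n c₂ c₁ ∧ InsPair n c₁ c₂ d₁ d₂

/-- A rewriting step of `ACol` (at some position). -/
def AColStep (n : ℕ) (w w' : List (List ℕ)) : Prop := ∃ j, StepAt n j w w'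

/-- The congruence generated by `ACol`, presenting `Pl^ℕ(C_n)`. -/
def AColEq (n : ℕ) : List (List ℕ) → List (List ℕ) → Prop :=
  Relation.EqvGen (AColStep n)

/-- `RedTo n w s w'` : applying the reduction strategy `s` (a list of
positions) to `w` is valid and yields `w'`. -/
inductive RedTo (n : ℕ) : List (List ℕ) → List ℕ → List (List ℕ) → Prop
  | nil (w : List (List ℕ)) : RedTo n w [] w
  | cons {w w' w'' : List (List ℕ)} {j : ℕ} {s : List ℕ} :
      StepAt n j w w' → RedTo n w' s w'' → RedTo n w (j :: s) w''

/-- A tableau word: a word of admissible columns with `c_{i+1} ⪯ c_i`. -/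
def TabWord (n : ℕ) (g : List (List ℕ)) : Prop :=
  (∀ c ∈ g, Admissible n c) ∧ List.Chain' (fun cl cr => Prec n cr cl) g

/-- The label of the crystal edge going out of the letter with index `x`. -/
def labelOf (n x : ℕ) : ℕ := if x < n then x + 1 else 2 * n - 1 - x

def phiL (n i x : ℕ) : ℕ := if x + 1 < 2 * n ∧ labelOf n x = i then 1 else 0

def epsL (n i x : ℕ) : ℕ := if 0 < x ∧ labelOf n (x - 1) = i then 1 else 0

/-- `ε_i` of a word (Kashiwara). -/
def epsW (n i : ℕ) : List ℕ → ℕ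
  | [] => 0
  | x :: u => epsL n i x + (epsW n i u - phiL n i x)

/-- `φ_i` of a word (Kashiwara). -/
def phiW (n i : ℕ) : List ℕ → ℕ
  | [] => 0
  | x :: u => phiW n i u + (phiL n i x - epsW n i u)

/-- The Kashiwara lowering operator `f_i` on words of `C_n^*`. -/
def fW (n i : ℕ) : List ℕ → Option (List ℕ)
  | [] => none
  | x :: u =>
      if epsW n i u < phiL n i x then some ((x + 1) :: u)
      else (fW n i u).map (x :: ·)

/-- The Kashiwara raising operator `e_i` on words of `C_n^*`. -/
def eW (n i : ℕ) : List ℕ → Option (List ℕ)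
  | [] => none
  | x :: u =>
      if epsW n i u ≤ phiL n i x then
        (if epsL n i x = 1 then some ((x - 1) :: u) else none)
      else (eW n i u).map (x :: ·)

/-- `f_i` on words over `ACol(C_n)` (each letter a column, `ε = []`). -/
def fA (n i : ℕ) : List (List ℕ) → Option (List (List ℕ))
  | [] => none
  | c :: w =>
      if epsW n i w.flatten < phiW n i c then (fW n i c).map (· :: w)
      else (fA n i w).map (c :: ·)

/-- `e_i` on words over `ACol(C_n)`. -/
def eA (n i : ℕ) : List (List ℕ) → Option (List (List ℕ))
  | [] => none
  | c :: w =>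
      if epsW n i w.flatten ≤ phiW n i c then (eW n i c).map (· :: w)
      else (eA n i w).map (c :: ·)

/-! C-trees.  A labeling of the `C`-tree is encoded by two functions
`sOut i j = s(ij)` (outer vertices, `sOut i 0 = s(i)`) and
`sInn i j = s(ij⁻)` (inner vertices, `j ≥ 1`), for strands `i ≥ 1`. -/

def SO (sOut : ℕ → ℕ → ℕ) (i j : ℕ) : ℕ := ∑ l ∈ Finset.range (j + 1), sOut i l
def SI (sInn : ℕ → ℕ → ℕ) (i j : ℕ) : ℕ := ∑ l ∈ Finset.range (j + 1), sInn i l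

/-- The valuation `q(ij)` at an outer vertex. -/
def qOut (sOut sInn : ℕ → ℕ → ℕ) (i j : ℕ) : ℕ := SO sOut i j - SI sInn i (j - 1)

/-- The valuation `q(ij⁻)` at an inner vertex. -/
def qInn (sOut sInn : ℕ → ℕ → ℕ) (i j : ℕ) : ℕ := SO sOut i j - SI sInn i j

/-- Labels vanish outside the rank-`k` truncation (and on the fictitious
strand `0` and inner vertices `i0⁻`). -/
def TreeSupport (k : ℕ) (sOut sInn : ℕ → ℕ → ℕ) : Prop :=
  (∀ i j, i = 0 ∨ k < i + j → sOut i j = 0) ∧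
  (∀ i j, i = 0 ∨ j = 0 ∨ k < i + j → sInn i j = 0)

/-- `n`-labeling condition: `0 ≤ q(v) ≤ n` at every vertex. -/
def NLabeled (n : ℕ) (sOut sInn : ℕ → ℕ → ℕ) : Prop :=
  ∀ i j, SI sInn i j ≤ SO sOut i j ∧ qOut sOut sInn i j ≤ n

/-- Column conditions: `q(ij) ≤ q((i−1)(j+1)⁻)` and `q(ij) ≤ q((i−1)j⁻)`. -/
def ColumnCond (k : ℕ) (sOut sInn : ℕ → ℕ → ℕ) : Prop :=
  ∀ i j, 2 ≤ i → i + j ≤ k →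
    qOut sOut sInn i j ≤ qInn sOut sInn (i - 1) (j + 1) ∧
    (1 ≤ j → qOut sOut sInn i j ≤ qInn sOut sInn (i - 1) j)

/-- Admissibility conditions of a labeled `C`-tree. -/
def AdmissCond (k : ℕ) (sOut sInn : ℕ → ℕ → ℕ) : Prop :=
  ∀ t l, t ≤ k → l + 1 ≤ t →
    (∑ i ∈ Finset.range (l + 1), (sOut (t - i) i + sInn (t - i) i)) ≤
      qOut sOut sInn (t - l) l

/-- An admissible `n`-labeled `C`-tree of rank `k`. -/
def IsAdmTree (n k : ℕ) (sOut sInn : ℕ → ℕ → ℕ) : Prop :=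
  TreeSupport k sOut sInn ∧ NLabeled n sOut sInn ∧
  ColumnCond k sOut sInn ∧ AdmissCond k sOut sInn

/-- The block column `ρ(ij)` read off an outer vertex. -/
def rhoOut (sOut sInn : ℕ → ℕ → ℕ) (i j : ℕ) : List ℕ :=
  if j = 0 then List.range (sOut i 0)
  else List.range' (qInn sOut sInn i (j - 1)) (sOut i j)

/-- The block column `ρ(ij⁻)` read off an inner vertex. -/
def rhoInn (n : ℕ) (sOut sInn : ℕ → ℕ → ℕ) (i j : ℕ) : List ℕ :=
  List.range' (2 * n - qOut sOut sInn i j) (sInn i j)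

/-- The reading `ω_t` of the `t`-th level. -/
def levelWord (n : ℕ) (sOut sInn : ℕ → ℕ → ℕ) (t : ℕ) : List ℕ :=
  ((List.range t).map (fun l => rhoOut sOut sInn (t - l) l)).flatten ++
  ((List.range (t - 1)).map (fun m => rhoInn n sOut sInn (m + 1) (t - (m + 1)))).flatten

/-- The reading `ω(T) ∈ ACol(C_n)^*` of a labeled `C`-tree of rank `k`. -/
def omegaT (n k : ℕ) (sOut sInn : ℕ → ℕ → ℕ) : List (List ℕ) :=
  (List.range k).map (fun t => levelWord n sOut sInn (t + 1))

private lemma get?_range_aux {m n x : ℕ} (h : getElem? (List.range n) m = some x) :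
    x = m ∧ m < n := by
  rcases Nat.lt_or_ge m n with h' | h'
  · rw [List.getElem?_range h'] at h
    exact ⟨(Option.some.injEq _ _ ▸ h).symm, h'⟩
  · rw [List.getElem?_eq_none (by simpa using h')] at h
    cases h

private lemma prec_range (n b c : ℕ) (hcb : c ≤ b) (hbn : b ≤ n) :
    Prec n (List.range b) (List.range c) := by
  refine ⟨by simpa using hcb, ?_, ?_⟩
  · intro i xi yi hx hy
    obtain ⟨hx1, _⟩ := get?_range_aux hx
    obtain ⟨hy1, _⟩ := get?_range_aux hy
    omega
  · rintro ⟨aa, bb, p, q, r, s, h1a, hab, hbn', hpq, hqr, hrs, hcase, hdiff⟩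
    rcases hcase with ⟨_, _, _, hd⟩ | ⟨_, _, _, hd⟩ <;>
    · obtain ⟨hv, hs⟩ := get?_range_aux hd
      omega

/-- The standard `C`-tree `T(a₁,…,a_k)` of a weakly decreasing sequence
`n ≥ a₁ ≥ ⋯ ≥ a_k ≥ 0` (with `a_{k+1} = 0`), labeled by
`s(ij) = a_{k−j} − a_{k−j+1}` for `i + j ≤ k` and `0` elsewhere, is an
admissible `n`-labeled `C`-tree, and its reading is the normal-form word
`ω(T) = 𝔠(a_k)𝔠(a_{k−1})⋯𝔠(a₁)` (where `𝔠(a) = 12⋯a = List.range a`). -/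
theorem stmt13 (n k : ℕ) (a : ℕ → ℕ)
    (ha : ∀ i, 1 ≤ i → i ≤ k → a (i + 1) ≤ a i)
    (hak : a (k + 1) = 0)
    (han : ∀ i, 1 ≤ i → i ≤ k → a i ≤ n)
    (sOut sInn : ℕ → ℕ → ℕ)
    (hs : sOut = fun i j =>
      if 1 ≤ i ∧ i + j ≤ k then a (k - j) - a (k - j + 1) else 0)
    (hsi : sInn = fun _ _ => 0) :
    IsAdmTree n k sOut sInn ∧
    omegaT n k sOut sInn = (List.range k).map (fun i => List.range (a (k - i))) ∧
    List.Chain' (fun cl cr => Prec n cr cl) (omegaT n k sOut sInn) := by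
  have hsO : ∀ i j, sOut i j =
      if 1 ≤ i ∧ i + j ≤ k then a (k - j) - a (k - j + 1) else 0 := by
    intro i j; rw [hs]
  have hsI : ∀ i j, sInn i j = 0 := by intro i j; rw [hsi]
  have hSI : ∀ i j, SI sInn i j = 0 := by
    intro i j; unfold SI; simp [hsI]
  have hqO : ∀ i j, qOut sOut sInn i j = SO sOut i j := by
    intro i j; unfold qOut; rw [hSI]; omega
  have hqI : ∀ i j, qInn sOut sInn i j = SO sOut i j := by
    intro i j; unfold qInn; rw [hSI]; omega
  have tel : ∀ m, m + 1 ≤ k →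
      (∑ l ∈ Finset.range (m + 1), (a (k - l) - a (k - l + 1))) = a (k - m) := by
    intro m
    induction m with
    | zero => intro _; simp [hak]
    | succ m ih =>
      intro hm
      rw [Finset.sum_range_succ, ih (by omega)]
      have h1 : 1 ≤ k - (m + 1) := by omega
      have h2 := ha (k - (m + 1)) h1 (by omega)
      have hkm : k - (m + 1) + 1 = k - m := by omega
      rw [hkm] at h2 ⊢
      omega
  have hSO : ∀ i j, 1 ≤ i → i ≤ k →
      SO sOut i j = a (k - min j (k - i)) := by
    intro i j hi hik
    unfold SO
    rcases le_or_gt j (k - i) with hle | hlt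
    · rw [min_eq_left hle, ← tel j (by omega)]
      refine Finset.sum_congr rfl fun l hl => ?_
      simp only [Finset.mem_range] at hl
      rw [hsO, if_pos ⟨hi, by omega⟩]
    · rw [min_eq_right (le_of_lt hlt), ← tel (k - i) (by omega),
        ← Finset.sum_subset (Finset.range_subset_range.mpr (by omega : k - i + 1 ≤ j + 1))]
      · refine Finset.sum_congr rfl fun l hl => ?_
        simp only [Finset.mem_range] at hl
        rw [hsO, if_pos ⟨hi, by omega⟩]
      · intro l hl hnl
        simp only [Finset.mem_range] at hl hnl
        rw [hsO, if_neg (by omega)]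
  have hSO0 : ∀ i j, i = 0 ∨ k < i → SO sOut i j = 0 := by
    intro i j h
    unfold SO
    refine Finset.sum_eq_zero fun l _ => ?_
    rw [hsO, if_neg (by omega)]
  have hadm : IsAdmTree n k sOut sInn := by
    refine ⟨⟨?_, ?_⟩, ?_, ?_, ?_⟩
    · intro i j h; rw [hsO, if_neg (by omega)]
    · intro i j _; exact hsI i j
    · intro i j
      refine ⟨by rw [hSI]; exact Nat.zero_le _, ?_⟩
      rw [hqO]
      rcases Nat.eq_zero_or_pos i with rfl | hi
      · rw [hSO0 0 j (Or.inl rfl)]; exact Nat.zero_le n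
      rcases le_or_gt i k with hik | hik
      · rw [hSO i j hi hik]
        exact han _ (by omega) (by omega)
      · rw [hSO0 i j (Or.inr hik)]; exact Nat.zero_le n
    · intro i j h2 hjk
      constructor
      · rw [hqO, hqI, hSO i j (by omega) (by omega),
          hSO (i - 1) (j + 1) (by omega) (by omega)]
        have e1 : k - min j (k - i) = k - j := by omega
        have e2 : k - min (j + 1) (k - (i - 1)) = k - j - 1 := by omega
        rw [e1, e2]
        have h1 : 1 ≤ k - j - 1 := by omega
        have h3 := ha (k - j - 1) h1 (by omega)
        have e3 : k - j - 1 + 1 = k - j := by omega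
        rw [e3] at h3
        exact h3
      · intro hj
        rw [hqO, hqI, hSO i j (by omega) (by omega),
          hSO (i - 1) j (by omega) (by omega)]
        have e1 : k - min j (k - i) = k - j := by omega
        have e2 : k - min j (k - (i - 1)) = k - j := by omega
        rw [e1, e2]
    · intro t l ht hl
      have hsum : (∑ i ∈ Finset.range (l + 1), (sOut (t - i) i + sInn (t - i) i))
          = a (k - l) := by
        rw [← tel l (by omega)]
        refine Finset.sum_congr rfl fun x hx => ?_
        simp only [Finset.mem_range] at hx
        rw [hsO, hsI, if_pos ⟨by omega, by omega⟩, add_zero]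
      rw [hsum, hqO, hSO (t - l) l (by omega) (by omega)]
      have e : k - min l (k - (t - l)) = k - l := by omega
      rw [e]
  have hrho : ∀ i j, 1 ≤ i → i + j ≤ k → rhoOut sOut sInn i j =
      if j = 0 then List.range (a k)
      else List.range' (a (k - j + 1)) (a (k - j) - a (k - j + 1)) := by
    intro i j hi hijk
    unfold rhoOut
    by_cases h0 : j = 0
    · subst h0
      rw [if_pos rfl, if_pos rfl]
      congr 1
      rw [hsO, if_pos ⟨hi, by omega⟩]
      simp only [Nat.sub_zero]
      omega
    · rw [if_neg h0, if_neg h0, hqI, hSO i (j - 1) hi (by omega),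
        hsO, if_pos ⟨hi, hijk⟩]
      have e : k - min (j - 1) (k - i) = k - j + 1 := by omega
      rw [e]
  have hflat : ∀ t, t ≤ k →
      ((List.range t).map (fun j =>
        if j = 0 then List.range (a k)
        else List.range' (a (k - j + 1)) (a (k - j) - a (k - j + 1)))).flatten
      = List.range (a (k - t + 1)) := by
    intro t
    induction t with
    | zero => intro _; simp [hak]
    | succ t ih =>
      intro htk
      rw [List.range_succ, List.map_append, List.flatten_append, ih (by omega)]
      simp only [List.map_cons, List.map_nil, List.flatten_cons, List.flatten_nil,
        List.append_nil]
      rcases Nat.eq_zero_or_pos t with rfl | hpos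
      · have e0 : k - 0 + 1 = k + 1 := by omega
        have e1 : k - 1 + 1 = k := by omega
        rw [e0, e1, hak, if_pos rfl]
        simp
      · rw [if_neg (by omega)]
        have hm : a (k - t + 1) + (a (k - t) - a (k - t + 1)) = a (k - t) := by
          have := ha (k - t) (by omega) (by omega)
          omega
        rw [List.range'_eq_map_range, ← List.range_add, hm]
        have e : k - (t + 1) + 1 = k - t := by omega
        rw [e]
  have hlevel : ∀ t, t < k →
      levelWord n sOut sInn (t + 1) = List.range (a (k - t)) := by
    intro t ht
    unfold levelWord
    have hinner : ((List.range (t + 1 - 1)).map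
        (fun m => rhoInn n sOut sInn (m + 1) (t + 1 - (m + 1)))).flatten = [] := by
      simp [rhoInn, hsI]
    rw [hinner, List.append_nil]
    have houter : (List.range (t + 1)).map (fun l => rhoOut sOut sInn (t + 1 - l) l)
        = (List.range (t + 1)).map (fun j =>
          if j = 0 then List.range (a k)
          else List.range' (a (k - j + 1)) (a (k - j) - a (k - j + 1))) := by
      refine List.map_congr_left fun l hl => ?_
      simp only [List.mem_range] at hl
      exact hrho (t + 1 - l) l (by omega) (by omega)
    rw [houter, hflat (t + 1) (by omega)]
    have e : k - (t + 1) + 1 = k - t := by omega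
    rw [e]
  have homega : omegaT n k sOut sInn
      = (List.range k).map (fun i => List.range (a (k - i))) := by
    unfold omegaT
    refine List.map_congr_left fun t ht => ?_
    simp only [List.mem_range] at ht
    exact hlevel t ht
  refine ⟨hadm, homega, ?_⟩
  rw [homega]; change List.IsChain _ _; rw [List.isChain_map]
  cases k with
  | zero => simp
  | succ m =>
    rw [List.isChain_range_succ]
    intro i hi
    have h1 : 1 ≤ m + 1 - (i + 1) := by omega
    have h2 := ha (m + 1 - (i + 1)) h1 (by omega)
    have e : m + 1 - (i + 1) + 1 = m + 1 - i := by omega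
    rw [e] at h2
    exact prec_range n _ _ h2 (han _ h1 (by omega))


end TypeC
end

section
/- For every admissible C-tree T, the reading ω(T) is a word of highest weight in ACol(C_n)*, i.e., no Kashiwara raising operator e_i is defined on ω(T). Moreover, f_i·ω(T) is defined if and only if i = q_j(T) for some j. -/
namespace TypeC

/-! ### Auxiliary lemmas on Kashiwara operators -/

lemma epsW_cons (n i x : ℕ) (u : List ℕ) :
    epsW n i (x :: u) = epsL n i x + (epsW n i u - phiL n i x) := rfl

lemma phiW_cons (n i x : ℕ) (u : List ℕ) :
    phiW n i (x :: u) = phiW n i u + (phiL n i x - epsW n i u) := rfl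

lemma eps_phi_append (n i : ℕ) (u v : List ℕ) :
    epsW n i (u ++ v) = epsW n i u + (epsW n i v - phiW n i u) ∧
    phiW n i (u ++ v) = phiW n i v + (phiW n i u - epsW n i v) := by
  induction u with
  | nil => simp [epsW, phiW]
  | cons x u ih =>
    simp only [List.cons_append, epsW_cons, phiW_cons, ih.1, ih.2]
    omega

lemma epsW_append (n i : ℕ) (u v : List ℕ) :
    epsW n i (u ++ v) = epsW n i u + (epsW n i v - phiW n i u) :=
  (eps_phi_append n i u v).1

lemma phiW_append (n i : ℕ) (u v : List ℕ) :
    phiW n i (u ++ v) = phiW n i v + (phiW n i u - epsW n i v) :=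
  (eps_phi_append n i u v).2

lemma epsL_le_one (n i x : ℕ) : epsL n i x ≤ 1 := by
  unfold epsL; split <;> omega

lemma phiL_le_one (n i x : ℕ) : phiL n i x ≤ 1 := by
  unfold phiL; split <;> omega

lemma not_both_one (n i x : ℕ) : ¬(epsL n i x = 1 ∧ phiL n i x = 1) := by
  rintro ⟨he, hf⟩
  unfold epsL at he
  unfold phiL at hf
  unfold labelOf at he hf
  split_ifs at he hf <;> omega

lemma eW_eq_none (n i : ℕ) (w : List ℕ) : eW n i w = none ↔ epsW n i w = 0 := by
  induction w with
  | nil => simp [eW, epsW]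
  | cons x u ih =>
    have h1 := epsL_le_one n i x
    have h2 := phiL_le_one n i x
    have h3 := not_both_one n i x
    rw [eW, epsW_cons]
    split_ifs with h he
    · simp only [reduceCtorEq, false_iff]; omega
    · simp only [true_iff]
      have : epsL n i x = 0 := by omega
      omega
    · simp only [Option.map_eq_none_iff, ih]
      omega

lemma fW_eq_none (n i : ℕ) (w : List ℕ) : fW n i w = none ↔ phiW n i w = 0 := by
  induction w with
  | nil => simp [fW, phiW]
  | cons x u ih =>
    rw [fW, phiW_cons]
    split_ifs with h
    · simp only [reduceCtorEq, false_iff]; omega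
    · simp only [Option.map_eq_none_iff, ih]
      omega

lemma eA_eq_none (n i : ℕ) (w : List (List ℕ)) :
    eA n i w = none ↔ epsW n i w.flatten = 0 := by
  induction w with
  | nil => simp [eA, epsW]
  | cons c u ih =>
    rw [eA, List.flatten_cons, epsW_append]
    split_ifs with h
    · simp only [Option.map_eq_none_iff, eW_eq_none]
      omega
    · simp only [Option.map_eq_none_iff, ih]
      omega

lemma fA_isSome (n i : ℕ) (w : List (List ℕ)) :
    (fA n i w).isSome ↔ 0 < phiW n i w.flatten := by
  induction w with
  | nil => simp [fA, phiW]
  | cons c u ih =>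
    rw [fA, List.flatten_cons, phiW_append]
    split_ifs with h
    · rw [Option.isSome_map]
      have : fW n i c ≠ none := by
        rw [Ne, fW_eq_none]; omega
      simp only [Option.isSome_iff_ne_none]
      constructor
      · intro _; omega
      · intro _; exact this
    · rw [Option.isSome_map, ih]
      omega

/-! ### ε and φ on letters and intervals -/

lemma epsL_lo (n i x : ℕ) (hi : 1 ≤ i) (hx : x < n) :
    epsL n i x = if x = i then 1 else 0 := by
  unfold epsL labelOf
  split_ifs <;> omega

lemma phiL_lo (n i x : ℕ) (hi : 1 ≤ i) (hx : x < n) :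
    phiL n i x = if x + 1 = i then 1 else 0 := by
  unfold phiL labelOf
  split_ifs <;> omega

lemma epsL_hi (n i x : ℕ) (hi : 1 ≤ i) (hn : i ≤ n) (hx : n ≤ x) (hx2 : x < 2 * n) :
    epsL n i x = if x = 2 * n - i then 1 else 0 := by
  unfold epsL labelOf
  split_ifs <;> omega

lemma phiL_hi (n i x : ℕ) (hi : 1 ≤ i) (hn : i ≤ n) (hx : n ≤ x) (hx2 : x < 2 * n) :
    phiL n i x = if x + 1 = 2 * n - i then 1 else 0 := by
  unfold phiL labelOf
  split_ifs <;> omega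

lemma epsW_range'_lo (n i : ℕ) (hi : 1 ≤ i) :
    ∀ s a, a + s ≤ n →
      epsW n i (List.range' a s) = if a = i ∧ 0 < s then 1 else 0 := by
  intro s
  induction s with
  | zero => intro a _; simp [epsW]
  | succ s ih =>
    intro a ha
    rw [List.range'_succ, epsW_cons, ih (a + 1) (by omega),
      epsL_lo n i a hi (by omega), phiL_lo n i a hi (by omega)]
    split_ifs <;> omega

lemma phiW_range'_lo (n i : ℕ) (hi : 1 ≤ i) :
    ∀ s a, a + s ≤ n →
      phiW n i (List.range' a s) = if a + s = i ∧ 0 < s then 1 else 0 := by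
  intro s
  induction s with
  | zero => intro a _; simp [phiW]
  | succ s ih =>
    intro a ha
    rw [List.range'_succ, phiW_cons, ih (a + 1) (by omega),
      epsW_range'_lo n i hi s (a + 1) (by omega),
      phiL_lo n i a hi (by omega)]
    split_ifs <;> omega

lemma epsW_range'_hi (n i : ℕ) (hi : 1 ≤ i) (hn : i ≤ n) :
    ∀ s a, n ≤ a → a + s ≤ 2 * n →
      epsW n i (List.range' a s) = if a = 2 * n - i ∧ 0 < s then 1 else 0 := by
  intro s
  induction s with
  | zero => intro a _ _; simp [epsW]
  | succ s ih =>
    intro a ha ha2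
    rw [List.range'_succ, epsW_cons, ih (a + 1) (by omega) (by omega),
      epsL_hi n i a hi hn ha (by omega), phiL_hi n i a hi hn ha (by omega)]
    split_ifs <;> omega

lemma phiW_range'_hi (n i : ℕ) (hi : 1 ≤ i) (hn : i ≤ n) :
    ∀ s a, n ≤ a → a + s ≤ 2 * n →
      phiW n i (List.range' a s) = if a + s = 2 * n - i ∧ 0 < s then 1 else 0 := by
  intro s
  induction s with
  | zero => intro a _ _; simp [phiW]
  | succ s ih =>
    intro a ha ha2
    rw [List.range'_succ, phiW_cons, ih (a + 1) (by omega) (by omega),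
      epsW_range'_hi n i hi hn s (a + 1) (by omega) (by omega),
      phiL_hi n i a hi hn ha (by omega)]
    split_ifs <;> omega

/-! ### Facts about the valuations `q` -/

section QFacts

variable {n : ℕ} {sOut sInn : ℕ → ℕ → ℕ}

lemma SO_succ (a j : ℕ) : SO sOut a (j + 1) = SO sOut a j + sOut a (j + 1) :=
  Finset.sum_range_succ _ _

lemma SI_succ (a j : ℕ) : SI sInn a (j + 1) = SI sInn a j + sInn a (j + 1) :=
  Finset.sum_range_succ _ _

lemma qOI0 (a : ℕ) : qOut sOut sInn a 0 = qInn sOut sInn a 0 := rfl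

lemma qO_le (hlab : NLabeled n sOut sInn) (a j : ℕ) : qOut sOut sInn a j ≤ n :=
  (hlab a j).2

lemma qI_le_qO (hlab : NLabeled n sOut sInn) (a j : ℕ) :
    qInn sOut sInn a j ≤ qOut sOut sInn a j := by
  cases j with
  | zero => rw [qOI0]
  | succ j =>
    have h := (hlab a (j + 1)).1
    have h2 : SI sInn a j ≤ SI sInn a (j + 1) := by rw [SI_succ]; omega
    unfold qOut qInn
    simp only [Nat.add_sub_cancel]
    omega

lemma qI_add_sOut (hlab : NLabeled n sOut sInn) (a j : ℕ) :
    qInn sOut sInn a j + sOut a (j + 1) = qOut sOut sInn a (j + 1) := by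
  have h := (hlab a j).1
  unfold qOut qInn
  simp only [Nat.add_sub_cancel]
  rw [SO_succ]
  omega

lemma qI_add_sInn (hlab : NLabeled n sOut sInn) (hinn0 : ∀ a, sInn a 0 = 0) (a j : ℕ) :
    qInn sOut sInn a j + sInn a j = qOut sOut sInn a j := by
  cases j with
  | zero => simp [qOI0, hinn0]
  | succ j =>
    have h := (hlab a (j + 1)).1
    have h2 := SI_succ (sInn := sInn) a j
    unfold qOut qInn
    simp only [Nat.add_sub_cancel]
    omega

lemma qO0_eq (hinn0 : ∀ a, sInn a 0 = 0) (a : ℕ) :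
    qOut sOut sInn a 0 = sOut a 0 := by
  unfold qOut SO SI
  simp [Finset.sum_range_one, hinn0]

end QFacts

/-! ### The main invariant computation -/

section MainInv

variable {n i : ℕ} {sOut sInn : ℕ → ℕ → ℕ}

/-- Composing an invariant word with a block. -/
lemma inv_append (w b : List ℕ) (m e f : ℕ)
    (hw : epsW n i w = 0) (hm : phiW n i w = m)
    (he : epsW n i b = e) (hf : phiW n i b = f) (hle : e ≤ m) :
    epsW n i (w ++ b) = 0 ∧ phiW n i (w ++ b) = f + (m - e) := by
  rw [epsW_append, phiW_append, hw, hm, he, hf]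
  omega

lemma unbarred_inv (hlab : NLabeled n sOut sInn) (hinn0 : ∀ a, sInn a 0 = 0)
    (hi : 1 ≤ i) (hn : i ≤ n) (t : ℕ) :
    ∀ l₀, l₀ ≤ t → ∀ w : List ℕ, epsW n i w = 0 →
    phiW n i w = (∑ x ∈ Finset.range t,
        if qInn sOut sInn (x + 1) (t - 1 - x) = i then 1 else 0) →
    epsW n i (w ++ ((List.range (l₀ + 1)).map
        (fun l => rhoOut sOut sInn (t + 1 - l) l)).flatten) = 0 ∧
    phiW n i (w ++ ((List.range (l₀ + 1)).map
        (fun l => rhoOut sOut sInn (t + 1 - l) l)).flatten) =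
      (∑ x ∈ Finset.range (t - l₀),
        if qInn sOut sInn (x + 1) (t - 1 - x) = i then 1 else 0) +
      ∑ l ∈ Finset.range (l₀ + 1),
        if qOut sOut sInn (t + 1 - l) l = i then 1 else 0 := by
  intro l₀
  induction l₀ with
  | zero =>
    intro _ w hw hm
    have hqs : qOut sOut sInn (t + 1) 0 = sOut (t + 1) 0 := qO0_eq hinn0 _
    have hsn : sOut (t + 1) 0 ≤ n := by
      have := qO_le hlab (t + 1) 0; omega
    have hG : ((List.range (0 + 1)).map
        (fun l => rhoOut sOut sInn (t + 1 - l) l)).flatten =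
        List.range' 0 (sOut (t + 1) 0) := by
      simp [List.range_succ, rhoOut, List.range_eq_range']
    rw [hG]
    have he := epsW_range'_lo n i hi (sOut (t + 1) 0) 0 (by omega)
    have hf := phiW_range'_lo n i hi (sOut (t + 1) 0) 0 (by omega)
    have key := inv_append w _ _ _ _ hw hm he hf (by split_ifs <;> omega)
    refine ⟨key.1, ?_⟩
    rw [key.2, Finset.sum_range_one]
    simp only [Nat.sub_zero]
    split_ifs <;> omega
  | succ l₀ ih =>
    intro hl w hw hm
    obtain ⟨h1, h2⟩ := ih (by omega) w hw hm
    -- split off the last block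
    rw [List.range_succ, List.map_append, List.flatten_append, ← List.append_assoc]
    simp only [List.map_cons, List.map_nil, List.flatten_cons, List.flatten_nil,
      List.append_nil]
    have hidx : t + 1 - (l₀ + 1) = t - l₀ := by omega
    rw [hidx]
    have hb : rhoOut sOut sInn (t - l₀) (l₀ + 1) =
        List.range' (qInn sOut sInn (t - l₀) l₀) (sOut (t - l₀) (l₀ + 1)) := by
      simp [rhoOut]
    have hq3 := qI_add_sOut hlab (t - l₀) l₀
    have hqn := qO_le hlab (t - l₀) (l₀ + 1)
    have he := epsW_range'_lo n i hi (sOut (t - l₀) (l₀ + 1))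
      (qInn sOut sInn (t - l₀) l₀) (by omega)
    have hf := phiW_range'_lo n i hi (sOut (t - l₀) (l₀ + 1))
      (qInn sOut sInn (t - l₀) l₀) (by omega)
    rw [hb]
    -- peel the top term of the first sum in h2
    rw [show t - l₀ = (t - (l₀ + 1)) + 1 from by omega, Finset.sum_range_succ] at h2
    rw [show t - (l₀ + 1) + 1 = t - l₀ from by omega] at h2
    rw [show t - 1 - (t - (l₀ + 1)) = l₀ from by omega] at h2
    have hle : (if qInn sOut sInn (t - l₀) l₀ = i ∧ 0 < sOut (t - l₀) (l₀ + 1)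
        then 1 else 0) ≤ phiW n i (w ++ ((List.range (l₀ + 1)).map
        (fun l => rhoOut sOut sInn (t + 1 - l) l)).flatten) := by
      rw [h2]; split_ifs <;> omega
    have key := inv_append _ _ _ _ _ h1 rfl he hf hle
    refine ⟨key.1, ?_⟩
    rw [key.2, h2,
      Finset.sum_range_succ (fun l => if qOut sOut sInn (t + 1 - l) l = i then 1 else 0)
        (l₀ + 1), hidx]
    split_ifs <;> omega

lemma barred_inv (hlab : NLabeled n sOut sInn) (hinn0 : ∀ a, sInn a 0 = 0)
    (hi : 1 ≤ i) (hn : i ≤ n) (t : ℕ) :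
    ∀ m₀, m₀ ≤ t → ∀ w : List ℕ, epsW n i w = 0 →
    phiW n i w = (∑ x ∈ Finset.range (t + 1),
        if qOut sOut sInn (t + 1 - x) x = i then 1 else 0) →
    epsW n i (w ++ ((List.range m₀).map
        (fun m => rhoInn n sOut sInn (m + 1) (t + 1 - (m + 1)))).flatten) = 0 ∧
    phiW n i (w ++ ((List.range m₀).map
        (fun m => rhoInn n sOut sInn (m + 1) (t + 1 - (m + 1)))).flatten) =
      (∑ x ∈ Finset.range (t + 1 - m₀),
        if qOut sOut sInn (t + 1 - x) x = i then 1 else 0) +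
      ∑ x ∈ Finset.range m₀,
        if qInn sOut sInn (x + 1) (t - x) = i then 1 else 0 := by
  intro m₀
  induction m₀ with
  | zero =>
    intro _ w hw hm
    simpa [hw, hm] using hm
  | succ m₀ ih =>
    intro hm₀ w hw hm
    obtain ⟨h1, h2⟩ := ih (by omega) w hw hm
    rw [List.range_succ, List.map_append, List.flatten_append, ← List.append_assoc]
    simp only [List.map_cons, List.map_nil, List.flatten_cons, List.flatten_nil,
      List.append_nil]
    have hidx : t + 1 - (m₀ + 1) = t - m₀ := by omega
    rw [hidx]
    have hq2 : qOut sOut sInn (m₀ + 1) (t - m₀) ≤ n := qO_le hlab _ _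
    have hq4 := qI_add_sInn hlab hinn0 (m₀ + 1) (t - m₀)
    have hb : rhoInn n sOut sInn (m₀ + 1) (t - m₀) =
        List.range' (2 * n - qOut sOut sInn (m₀ + 1) (t - m₀))
          (sInn (m₀ + 1) (t - m₀)) := rfl
    have he := epsW_range'_hi n i hi hn (sInn (m₀ + 1) (t - m₀))
      (2 * n - qOut sOut sInn (m₀ + 1) (t - m₀)) (by omega) (by omega)
    have hf := phiW_range'_hi n i hi hn (sInn (m₀ + 1) (t - m₀))
      (2 * n - qOut sOut sInn (m₀ + 1) (t - m₀)) (by omega) (by omega)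
    rw [hb]
    -- peel the top term of the first sum in h2
    rw [show t + 1 - m₀ = (t - m₀) + 1 from by omega, Finset.sum_range_succ] at h2
    rw [show t + 1 - (t - m₀) = m₀ + 1 from by omega] at h2
    have hle : (if 2 * n - qOut sOut sInn (m₀ + 1) (t - m₀) = 2 * n - i ∧
        0 < sInn (m₀ + 1) (t - m₀) then 1 else 0) ≤ phiW n i (w ++ ((List.range m₀).map
        (fun m => rhoInn n sOut sInn (m + 1) (t + 1 - (m + 1)))).flatten) := by
      rw [h2]; split_ifs <;> omega
    have key := inv_append _ _ _ _ _ h1 rfl he hf hle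
    refine ⟨key.1, ?_⟩
    rw [key.2, h2,
      Finset.sum_range_succ (fun x => if qInn sOut sInn (x + 1) (t - x) = i then 1 else 0)
        m₀]
    have hqI : qInn sOut sInn (m₀ + 1) (t - m₀) ≤ n :=
      le_trans (qI_le_qO hlab _ _) hq2
    split_ifs <;> omega

lemma levels_inv (hlab : NLabeled n sOut sInn) (hinn0 : ∀ a, sInn a 0 = 0)
    (hi : 1 ≤ i) (hn : i ≤ n) : ∀ t,
    epsW n i (((List.range t).map (fun u => levelWord n sOut sInn (u + 1))).flatten) = 0 ∧
    phiW n i (((List.range t).map (fun u => levelWord n sOut sInn (u + 1))).flatten) =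
      ∑ x ∈ Finset.range t, if qInn sOut sInn (x + 1) (t - 1 - x) = i then 1 else 0 := by
  intro t
  induction t with
  | zero => simp [epsW, phiW]
  | succ t ih =>
    obtain ⟨h1, h2⟩ := ih
    rw [List.range_succ, List.map_append, List.flatten_append]
    simp only [List.map_cons, List.map_nil, List.flatten_cons, List.flatten_nil,
      List.append_nil]
    have hLW : levelWord n sOut sInn (t + 1) =
        ((List.range (t + 1)).map (fun l => rhoOut sOut sInn (t + 1 - l) l)).flatten ++
        ((List.range t).map
          (fun m => rhoInn n sOut sInn (m + 1) (t + 1 - (m + 1)))).flatten := by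
      simp [levelWord]
    rw [hLW, ← List.append_assoc]
    have hu := unbarred_inv hlab hinn0 hi hn t t le_rfl _ h1 h2
    simp only [Nat.sub_self, Finset.range_zero, Finset.sum_empty, zero_add] at hu
    have hbr := barred_inv hlab hinn0 hi hn t t le_rfl _ hu.1 hu.2
    refine ⟨hbr.1, ?_⟩
    rw [hbr.2, show t + 1 - t = 1 from by omega, Finset.sum_range_one]
    simp only [Nat.sub_zero, Nat.add_sub_cancel]
    rw [Finset.sum_range_succ]
    simp only [Nat.sub_self, qOI0]
    exact add_comm _ _

end MainInv

/-- The reading `ω(T)` of an admissible `C`-tree is a highest weight word: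
no raising operator `e_i` is defined on it.  Moreover `f_i·ω(T)` is defined
if and only if `i = q_j(T)` for some strand `j`. -/
theorem stmt15 (n k : ℕ) (sOut sInn : ℕ → ℕ → ℕ)
    (h : IsAdmTree n k sOut sInn) :
    (∀ i, 1 ≤ i → i ≤ n → eA n i (omegaT n k sOut sInn) = none) ∧
    (∀ i, 1 ≤ i → i ≤ n →
      ((fA n i (omegaT n k sOut sInn)).isSome ↔
        ∃ j, 1 ≤ j ∧ j ≤ k ∧ qInn sOut sInn j (k - j) = i)) := by
  obtain ⟨hsupp, hlab, _, _⟩ := h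
  have hinn0 : ∀ a, sInn a 0 = 0 := fun a => hsupp.2 a 0 (Or.inr (Or.inl rfl))
  have homega : omegaT n k sOut sInn =
      (List.range k).map (fun u => levelWord n sOut sInn (u + 1)) := rfl
  constructor
  · intro i hi hn
    rw [eA_eq_none, homega]
    exact (levels_inv hlab hinn0 hi hn k).1
  · intro i hi hn
    rw [fA_isSome, homega, (levels_inv hlab hinn0 hi hn k).2]
    constructor
    · intro hpos
      by_contra hno
      push_neg at hno
      have hz : ∀ x ∈ Finset.range k,
          (if qInn sOut sInn (x + 1) (k - 1 - x) = i then 1 else 0) = 0 := by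
        intro x hx
        have hx' := Finset.mem_range.mp hx
        have hne : qInn sOut sInn (x + 1) (k - (x + 1)) ≠ i := hno (x + 1) (by omega) (by omega)
        rw [show k - 1 - x = k - (x + 1) from by omega]
        simp [hne]
      rw [Finset.sum_eq_zero hz] at hpos
      omega
    · rintro ⟨j, hj1, hjk, hq⟩
      have hmem : j - 1 ∈ Finset.range k := Finset.mem_range.mpr (by omega)
      have hterm : (if qInn sOut sInn (j - 1 + 1) (k - 1 - (j - 1)) = i then 1 else 0) = 1 := by
        rw [show j - 1 + 1 = j from by omega, show k - 1 - (j - 1) = k - j from by omega]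
        simp [hq]
      have hsum : (if qInn sOut sInn (j - 1 + 1) (k - 1 - (j - 1)) = i then 1 else 0) ≤
          ∑ x ∈ Finset.range k, if qInn sOut sInn (x + 1) (k - 1 - x) = i then 1 else 0 :=
        Finset.single_le_sum
          (f := fun x => if qInn sOut sInn (x + 1) (k - 1 - x) = i then 1 else 0)
          (fun _ _ => Nat.zero_le _) hmem
      omega

end TypeC
end
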